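/- If k and l are both even (and k ≥ 1, l ≥ 1), then S(k−1,l) + S(k,l−1) = S(k,l). -/

import Mathlib

open Finset

/-- `Young k l` is the set of Young diagrams of height at most `k` and width at most `l`:
integer sequences `l ≥ λ_1 ≥ … ≥ λ_k ≥ 0`, encoded as antitone functions `Fin k → ℕ`
bounded by `l`. -/
def Young (k l : ℕ) : Finset (Fin k → ℕ) :=
  (Fintype.piFinset fun _ => Finset.range (l + 1)).filter
    fun lam => ∀ i j : Fin k, i ≤ j → lam j ≤ lam i

/-- `R k l` is the number of Young diagrams of height at most `k` and width at most `l`. -/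
def R (k l : ℕ) : ℕ := (Young k l).card

/-- The complement of a Young diagram inside the `k × l` rectangle:
`(λ^c)_i = l - λ_{k+1-i}`. -/
def Ycomp (l : ℕ) {k : ℕ} (lam : Fin k → ℕ) : Fin k → ℕ :=
  fun i => l - lam i.rev

/-- `S k l` is the number of symmetric partitions (`λ = λ^c`) in `Young k l`. -/
def S (k l : ℕ) : ℕ := ((Young k l).filter fun lam => Ycomp l lam = lam).card

/-- `A k l` is the number of asymmetric partitions (`λ ≠ λ^c`) in `Young k l`. -/
def A (k l : ℕ) : ℕ := ((Young k l).filter fun lam => Ycomp l lam ≠ lam).card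

/-- The transpose of a Young diagram: `(λ^t)_j = #{ i | λ_i ≥ j }` (here `j : Fin l` is
the 0-indexed version of the 1-indexed column index `j+1`). -/
def Ytr {k : ℕ} (l : ℕ) (lam : Fin k → ℕ) : Fin l → ℕ :=
  fun j => (Finset.univ.filter fun i : Fin k => (j : ℕ) + 1 ≤ lam i).card


lemma mem_symmYoung_iff {n l : ℕ} {lam : Fin n → ℕ} :
    lam ∈ (Young n l).filter (fun lam => Ycomp l lam = lam) ↔
      (∀ i, lam i ≤ l) ∧ (∀ i j : Fin n, (i : ℕ) ≤ j → lam j ≤ lam i) ∧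
      (∀ x y (hx : x < n) (hy : y < n), x + y + 1 = n →
        lam ⟨x, hx⟩ + lam ⟨y, hy⟩ = l) := by
  rw [Finset.mem_filter, Young, Finset.mem_filter, Fintype.mem_piFinset]
  simp only [Finset.mem_range, Nat.lt_succ_iff]
  constructor
  · rintro ⟨⟨hb, hant⟩, hsym⟩
    refine ⟨hb, fun i j hij => hant i j hij, fun x y hx hy hxy => ?_⟩
    have h1 := congrFun hsym ⟨x, hx⟩
    have hrev : (⟨x, hx⟩ : Fin n).rev = ⟨y, hy⟩ := by
      apply Fin.ext; simp [Fin.val_rev]; omega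
    rw [Ycomp] at h1
    simp only [hrev] at h1
    have := hb ⟨y, hy⟩
    omega
  · rintro ⟨hb, hant, hpair⟩
    refine ⟨⟨hb, fun i j hij => hant i j hij⟩, ?_⟩
    funext i
    show l - lam i.rev = lam i
    have := hpair i.val i.rev.val i.isLt i.rev.isLt (by simp [Fin.val_rev]; omega)
    simp only [Fin.eta] at this
    omega

def e1 (a : ℕ) (i : Fin (2 * a)) : Fin (2 * a - 1) :=
  ⟨if (i : ℕ) < a then i else i - 1, by have := i.isLt; split <;> omega⟩

def e2 (a : ℕ) (i : Fin (2 * a - 1)) : Fin (2 * a) :=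
  ⟨if (i : ℕ) < a then i else i + 1, by have := i.isLt; split <;> omega⟩

lemma e1_val (a : ℕ) (i : Fin (2 * a)) :
    (e1 a i : ℕ) = if (i : ℕ) < a then (i : ℕ) else (i : ℕ) - 1 := rfl

lemma e2_val (a : ℕ) (i : Fin (2 * a - 1)) :
    (e2 a i : ℕ) = if (i : ℕ) < a then (i : ℕ) else (i : ℕ) + 1 := rfl

lemma e1_lt (a x : ℕ) (hx : x < 2 * a) (h : x < a) : e1 a ⟨x, hx⟩ = ⟨x, by omega⟩ := by
  apply Fin.ext
  show (if x < a then x else x - 1) = x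
  rw [if_pos h]

lemma e1_ge (a x : ℕ) (hx : x < 2 * a) (h : a ≤ x) : e1 a ⟨x, hx⟩ = ⟨x - 1, by omega⟩ := by
  apply Fin.ext
  show (if x < a then x else x - 1) = x - 1
  rw [if_neg (by omega)]

lemma e2_lt (a x : ℕ) (hx : x < 2 * a - 1) (h : x < a) : e2 a ⟨x, hx⟩ = ⟨x, by omega⟩ := by
  apply Fin.ext
  show (if x < a then x else x + 1) = x
  rw [if_pos h]

lemma e2_ge (a x : ℕ) (hx : x < 2 * a - 1) (h : a ≤ x) : e2 a ⟨x, hx⟩ = ⟨x + 1, by omega⟩ := by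
  apply Fin.ext
  show (if x < a then x else x + 1) = x + 1
  rw [if_neg (by omega)]

lemma e1_e2 (a : ℕ) (i : Fin (2 * a - 1)) : e1 a (e2 a i) = i := by
  apply Fin.ext
  rw [e1_val, e2_val]
  have := i.isLt
  split_ifs <;> omega

lemma e2_e1 (a : ℕ) (i : Fin (2 * a)) (h : (i : ℕ) ≠ a) : e2 a (e1 a i) = i := by
  apply Fin.ext
  rw [e2_val, e1_val]
  have := i.isLt
  split_ifs <;> omega

lemma e2_e1_mid (a : ℕ) (ha : 1 ≤ a) (i : Fin (2 * a)) (h : (i : ℕ) = a) :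
    e2 a (e1 a i) = ⟨a - 1, by omega⟩ := by
  apply Fin.ext
  rw [e2_val, e1_val]
  show _ = a - 1
  split_ifs <;> omega

def F1 (a : ℕ) (lam : Fin (2 * a - 1) → ℕ) : Fin (2 * a) → ℕ := fun i => lam (e1 a i)

def G1 (a : ℕ) (lam : Fin (2 * a) → ℕ) : Fin (2 * a - 1) → ℕ := fun i => lam (e2 a i)

def F2 (a : ℕ) (lam : Fin (2 * a) → ℕ) : Fin (2 * a) → ℕ :=
  fun i => if (i : ℕ) < a then lam i + 1 else lam i

def G2 (a : ℕ) (lam : Fin (2 * a) → ℕ) : Fin (2 * a) → ℕ :=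
  fun i => if (i : ℕ) < a then lam i - 1 else lam i

lemma L1 (a b : ℕ) (ha : 1 ≤ a) (hb : 1 ≤ b) :
    S (2 * a - 1) (2 * b) =
      (((Young (2 * a) (2 * b)).filter fun lam => Ycomp (2 * b) lam = lam).filter
        fun lam => lam ⟨a - 1, by omega⟩ ≤ b).card := by
  have pm1 : a - 1 < 2 * a := by omega
  have pm2 : a < 2 * a := by omega
  have pm1' : a - 1 < 2 * a - 1 := by omega
  rw [S]
  apply Finset.card_nbij' (F1 a) (G1 a)
  · -- F1 maps symmetric (2a-1, 2b) into the filtered set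
    intro lam hlam
    rw [Finset.mem_coe, mem_symmYoung_iff] at hlam
    obtain ⟨hbd, hant, hpair⟩ := hlam
    have hmid : lam ⟨a - 1, pm1'⟩ = b := by
      have := hpair (a - 1) (a - 1) pm1' pm1' (by omega)
      omega
    rw [Finset.mem_coe, Finset.mem_filter]
    constructor
    · rw [mem_symmYoung_iff]
      refine ⟨fun i => hbd _, ?_, ?_⟩
      · intro i j hij
        exact hant (e1 a i) (e1 a j) (by rw [e1_val, e1_val]; split_ifs <;> omega)
      · intro x y hx hy hxy
        show lam (e1 a ⟨x, hx⟩) + lam (e1 a ⟨y, hy⟩) = 2 * b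
        rcases lt_or_ge x a with h | h
        · rw [e1_lt a x hx h, e1_ge a y hy (by omega)]
          exact hpair x (y - 1) _ _ (by omega)
        · rw [e1_ge a x hx h, e1_lt a y hy (by omega)]
          exact hpair (x - 1) y _ _ (by omega)
    · show lam (e1 a ⟨a - 1, pm1⟩) ≤ b
      rw [e1_lt a (a - 1) pm1 (by omega)]
      exact le_of_eq hmid
  · -- G1 maps the filtered set into symmetric (2a-1, 2b)
    intro lam hlam
    rw [Finset.mem_coe, Finset.mem_filter, mem_symmYoung_iff] at hlam
    obtain ⟨⟨hbd, hant, hpair⟩, hP⟩ := hlam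
    have hP' : lam ⟨a - 1, pm1⟩ ≤ b := hP
    have hmid12 : lam ⟨a - 1, pm1⟩ + lam ⟨a, pm2⟩ = 2 * b :=
      hpair (a - 1) a pm1 pm2 (by omega)
    have hle : lam ⟨a, pm2⟩ ≤ lam ⟨a - 1, pm1⟩ :=
      hant ⟨a - 1, pm1⟩ ⟨a, pm2⟩ (show a - 1 ≤ a by omega)
    have hm1 : lam ⟨a - 1, pm1⟩ = b := by omega
    rw [Finset.mem_coe, mem_symmYoung_iff]
    refine ⟨fun i => hbd _, ?_, ?_⟩
    · intro i j hij
      exact hant (e2 a i) (e2 a j) (by rw [e2_val, e2_val]; split_ifs <;> omega)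
    · intro x y hx hy hxy
      show lam (e2 a ⟨x, hx⟩) + lam (e2 a ⟨y, hy⟩) = 2 * b
      rcases lt_or_ge x a with h | h
      · rcases lt_or_ge y a with h2 | h2
        · -- x = y = a - 1
          have hxe : x = a - 1 := by omega
          have hye : y = a - 1 := by omega
          subst hxe; subst hye
          rw [e2_lt a (a - 1) hx h, hm1]
          omega
        · rw [e2_lt a x hx h, e2_ge a y hy h2]
          exact hpair x (y + 1) _ _ (by omega)
      · rw [e2_ge a x hx h, e2_lt a y hy (by omega)]
        exact hpair (x + 1) y _ _ (by omega)
  · -- left inverse: G1 (F1 lam) = lam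
    intro lam _
    funext i
    show lam (e1 a (e2 a i)) = lam i
    rw [e1_e2]
  · -- right inverse: F1 (G1 lam) = lam
    intro lam hlam
    rw [Finset.mem_coe, Finset.mem_filter, mem_symmYoung_iff] at hlam
    obtain ⟨⟨hbd, hant, hpair⟩, hP⟩ := hlam
    have hP' : lam ⟨a - 1, pm1⟩ ≤ b := hP
    have hmid12 : lam ⟨a - 1, pm1⟩ + lam ⟨a, pm2⟩ = 2 * b :=
      hpair (a - 1) a pm1 pm2 (by omega)
    have hle : lam ⟨a, pm2⟩ ≤ lam ⟨a - 1, pm1⟩ :=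
      hant ⟨a - 1, pm1⟩ ⟨a, pm2⟩ (show a - 1 ≤ a by omega)
    have hm1 : lam ⟨a - 1, pm1⟩ = b := by omega
    have hm2 : lam ⟨a, pm2⟩ = b := by omega
    funext i
    show lam (e2 a (e1 a i)) = lam i
    by_cases hia : (i : ℕ) = a
    · rw [e2_e1_mid a ha i hia, hm1]
      have : i = ⟨a, pm2⟩ := Fin.ext hia
      rw [this, hm2]
    · rw [e2_e1 a i hia]

lemma L2 (a b : ℕ) (ha : 1 ≤ a) (hb : 1 ≤ b) :
    S (2 * a) (2 * b - 1) =
      (((Young (2 * a) (2 * b)).filter fun lam => Ycomp (2 * b) lam = lam).filter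
        fun lam => ¬ lam ⟨a - 1, by omega⟩ ≤ b).card := by
  have pm1 : a - 1 < 2 * a := by omega
  have pm2 : a < 2 * a := by omega
  rw [S]
  apply Finset.card_nbij' (F2 a) (G2 a)
  · -- F2 maps symmetric (2a, 2b-1) into the filtered set
    intro lam hlam
    rw [Finset.mem_coe, mem_symmYoung_iff] at hlam
    obtain ⟨hbd, hant, hpair⟩ := hlam
    have hmid12 : lam ⟨a - 1, pm1⟩ + lam ⟨a, pm2⟩ = 2 * b - 1 :=
      hpair (a - 1) a pm1 pm2 (by omega)
    have hle : lam ⟨a, pm2⟩ ≤ lam ⟨a - 1, pm1⟩ :=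
      hant ⟨a - 1, pm1⟩ ⟨a, pm2⟩ (show a - 1 ≤ a by omega)
    rw [Finset.mem_coe, Finset.mem_filter]
    constructor
    · rw [mem_symmYoung_iff]
      refine ⟨?_, ?_, ?_⟩
      · intro i
        show (if (i : ℕ) < a then lam i + 1 else lam i) ≤ 2 * b
        have := hbd i
        split_ifs <;> omega
      · intro i j hij
        show (if (j : ℕ) < a then lam j + 1 else lam j) ≤
          (if (i : ℕ) < a then lam i + 1 else lam i)
        have := hant i j hij
        split_ifs <;> omega
      · intro x y hx hy hxy
        show (if x < a then lam ⟨x, hx⟩ + 1 else lam ⟨x, hx⟩) +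
          (if y < a then lam ⟨y, hy⟩ + 1 else lam ⟨y, hy⟩) = 2 * b
        have := hpair x y hx hy (by omega)
        rcases lt_or_ge x a with h | h
        · rw [if_pos h, if_neg (by omega)]
          omega
        · rw [if_neg (by omega), if_pos (by omega)]
          omega
    · show ¬ (if a - 1 < a then lam ⟨a - 1, pm1⟩ + 1 else lam ⟨a - 1, pm1⟩) ≤ b
      rw [if_pos (by omega)]
      omega
  · -- G2 maps the filtered set into symmetric (2a, 2b-1)
    intro lam hlam
    rw [Finset.mem_coe, Finset.mem_filter, mem_symmYoung_iff] at hlam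
    obtain ⟨⟨hbd, hant, hpair⟩, hP⟩ := hlam
    have hP' : ¬ lam ⟨a - 1, pm1⟩ ≤ b := hP
    have hmid12 : lam ⟨a - 1, pm1⟩ + lam ⟨a, pm2⟩ = 2 * b :=
      hpair (a - 1) a pm1 pm2 (by omega)
    have hle : lam ⟨a, pm2⟩ ≤ lam ⟨a - 1, pm1⟩ :=
      hant ⟨a - 1, pm1⟩ ⟨a, pm2⟩ (show a - 1 ≤ a by omega)
    have hlow : ∀ i : Fin (2 * a), (i : ℕ) < a → b + 1 ≤ lam i := by
      intro i hi
      have := hant i ⟨a - 1, pm1⟩ (show (i : ℕ) ≤ a - 1 by omega)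
      omega
    have hhigh : ∀ i : Fin (2 * a), a ≤ (i : ℕ) → lam i ≤ b - 1 := by
      intro i hi
      have := hant ⟨a, pm2⟩ i (show a ≤ (i : ℕ) from hi)
      omega
    rw [Finset.mem_coe, mem_symmYoung_iff]
    refine ⟨?_, ?_, ?_⟩
    · intro i
      show (if (i : ℕ) < a then lam i - 1 else lam i) ≤ 2 * b - 1
      have h1 := hbd i
      rcases lt_or_ge (i : ℕ) a with h | h
      · rw [if_pos h]; omega
      · rw [if_neg (by omega)]
        have := hhigh i h
        omega
    · intro i j hij
      show (if (j : ℕ) < a then lam j - 1 else lam j) ≤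
        (if (i : ℕ) < a then lam i - 1 else lam i)
      have h1 := hant i j hij
      rcases lt_or_ge (j : ℕ) a with h2 | h2
      · rw [if_pos h2, if_pos (by omega)]; omega
      · rw [if_neg (by omega)]
        rcases lt_or_ge (i : ℕ) a with h3 | h3
        · rw [if_pos h3]
          have := hhigh j h2
          have := hlow i h3
          omega
        · rw [if_neg (by omega)]; omega
    · intro x y hx hy hxy
      show (if x < a then lam ⟨x, hx⟩ - 1 else lam ⟨x, hx⟩) +
        (if y < a then lam ⟨y, hy⟩ - 1 else lam ⟨y, hy⟩) = 2 * b - 1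
      have := hpair x y hx hy (by omega)
      rcases lt_or_ge x a with h | h
      · rw [if_pos h, if_neg (by omega)]
        have := hlow ⟨x, hx⟩ h
        omega
      · rw [if_neg (by omega), if_pos (by omega)]
        have := hlow ⟨y, hy⟩ (show y < a by omega)
        omega
  · -- left inverse: G2 (F2 lam) = lam
    intro lam _
    funext i
    show (if (i : ℕ) < a then (if (i : ℕ) < a then lam i + 1 else lam i) - 1
      else (if (i : ℕ) < a then lam i + 1 else lam i)) = lam i
    by_cases h : (i : ℕ) < a <;> simp [h]
  · -- right inverse: F2 (G2 lam) = lam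
    intro lam hlam
    rw [Finset.mem_coe, Finset.mem_filter, mem_symmYoung_iff] at hlam
    obtain ⟨⟨hbd, hant, hpair⟩, hP⟩ := hlam
    have hP' : ¬ lam ⟨a - 1, pm1⟩ ≤ b := hP
    have hlow : ∀ i : Fin (2 * a), (i : ℕ) < a → b + 1 ≤ lam i := by
      intro i hi
      have := hant i ⟨a - 1, pm1⟩ (show (i : ℕ) ≤ a - 1 by omega)
      omega
    funext i
    show (if (i : ℕ) < a then (if (i : ℕ) < a then lam i - 1 else lam i) + 1
      else (if (i : ℕ) < a then lam i - 1 else lam i)) = lam i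
    by_cases h : (i : ℕ) < a
    · rw [if_pos h, if_pos h]
      have := hlow i h
      omega
    · rw [if_neg h, if_neg h]


/-- if k and l are both even (and positive) then
S(k-1,l) + S(k,l-1) = S(k,l). -/
theorem S_even_recursion (k l : ℕ) (hk : Even k) (hl : Even l)
    (hk1 : 1 ≤ k) (hl1 : 1 ≤ l) :
    S (k - 1) l + S k (l - 1) = S k l := by
  obtain ⟨a, rfl⟩ := hk
  obtain ⟨b, rfl⟩ := hl
  have ha : 1 ≤ a := by omega
  have hb : 1 ≤ b := by omega
  rw [show a + a = 2 * a from (two_mul a).symm, show b + b = 2 * b from (two_mul b).symm]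
  rw [L1 a b ha hb, L2 a b ha hb, S]
  exact Finset.card_filter_add_card_filter_not _
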